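/- arXiv:2104.13481 — 6 statements merged into one kernel-verified Lean document; each statement's English description precedes it below -/
import Mathlib

section
/- Let S be an inverse semigroup and β : N → S an idempotent-separating homomorphism from a semilattice of groups N satisfying the Peiffer identity λ_{β(n)}(n') = n n' n⁻¹ for all n, n' ∈ N (where λ is the crossed-module action). Then the set A = β⁻¹(E(S)) is contained in the center of N. -/
/-- An inverse semigroup: every element `s` has a (unique) inverse `s⁻¹`
with `s * s⁻¹ * s = s` and `s⁻¹ * s * s⁻¹ = s⁻¹`. -/
class InverseSemigroup (S : Type*) extends Semigroup S, Inv S where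
  mul_inv_mul : ∀ s : S, s * s⁻¹ * s = s
  inv_mul_inv : ∀ s : S, s⁻¹ * s * s⁻¹ = s⁻¹
  inv_unique : ∀ s t : S, s * t * s = s → t * s * t = t → t = s⁻¹

namespace InverseSemigroup

/-- The set of idempotents of a multiplicative structure. -/
def E (S : Type*) [Mul S] : Set S := {e | e * e = e}

/-- The natural partial order: `s ≤ t` iff `s = s * s⁻¹ * t`. -/
def nle {S : Type*} [Mul S] [Inv S] (s t : S) : Prop := s = s * s⁻¹ * t

/-- `r s = s * s⁻¹`. -/
def r {S : Type*} [Mul S] [Inv S] (s : S) : S := s * s⁻¹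

/-- A Clifford semigroup (semilattice of groups): idempotents are central. -/
def IsClifford (S : Type*) [Mul S] : Prop := ∀ e ∈ E S, ∀ s : S, e * s = s * e

end InverseSemigroup

open InverseSemigroup

theorem my_idem_inv {S : Type*} [InverseSemigroup S] {e : S} (he : e ∈ E S) : e⁻¹ = e := by
  have h : e * e * e = e := by rw [he, he]
  exact (InverseSemigroup.inv_unique e e h h).symm

theorem my_mul_inv_idem {S : Type*} [InverseSemigroup S] (a : S) : a * a⁻¹ ∈ E S := by
  show a * a⁻¹ * (a * a⁻¹) = a * a⁻¹
  rw [mul_assoc, ← mul_assoc a⁻¹ a a⁻¹, InverseSemigroup.inv_mul_inv]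

theorem my_inv_mul_idem {S : Type*} [InverseSemigroup S] (a : S) : a⁻¹ * a ∈ E S := by
  show a⁻¹ * a * (a⁻¹ * a) = a⁻¹ * a
  rw [← mul_assoc, InverseSemigroup.inv_mul_inv]

/-- If `β : N → S` is an idempotent-separating homomorphism from a semilattice of
groups `N` to an inverse semigroup `S`, satisfying the Peiffer identity
`λ_{β(n)}(n') = n * n' * n⁻¹`, then `A = β⁻¹(E(S))` is contained in the center of `N`. -/
theorem crossed_module_kernel_central {S N : Type*} [InverseSemigroup S] [InverseSemigroup N]
    (hN : IsClifford N)
    (β : N → S) (hβ : ∀ m n : N, β (m * n) = β m * β n)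
    (hsep : ∀ m ∈ E N, ∀ n ∈ E N, β m = β n → m = n)
    (lam : S → N → N)
    (hPeiffer : ∀ m n : N, lam (β m) n = m * n * m⁻¹) :
    ∀ a : N, β a ∈ E S → ∀ n : N, a * n = n * a := by
  intro a ha n
  -- β preserves inverses
  have hβinv : β a⁻¹ = (β a)⁻¹ := by
    apply InverseSemigroup.inv_unique
    · rw [← hβ, ← hβ, InverseSemigroup.mul_inv_mul]
    · rw [← hβ, ← hβ, InverseSemigroup.inv_mul_inv]
  have haa : a * a⁻¹ ∈ E N := my_mul_inv_idem a
  -- β (a * a⁻¹) = β a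
  have hba : β (a * a⁻¹) = β a := by
    rw [hβ, hβinv, my_idem_inv ha, ha]
  -- Peiffer with m = a and m = a * a⁻¹
  have key : a * n * a⁻¹ = (a * a⁻¹) * n * (a * a⁻¹) := by
    have h1 := hPeiffer a n
    have h2 := hPeiffer (a * a⁻¹) n
    rw [hba] at h2
    rw [← h1, h2, my_idem_inv haa]
  -- e n e = n e for central idempotent e
  have hcent := hN _ haa n
  have key2 : a * n * a⁻¹ = n * (a * a⁻¹) := by
    rw [key, hcent, mul_assoc, haa]
  have hc2 : a⁻¹ * a * n = n * (a⁻¹ * a) := hN _ (my_inv_mul_idem a) n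
  calc a * n = a * (a⁻¹ * a * n) := by
        rw [← mul_assoc, ← mul_assoc, InverseSemigroup.mul_inv_mul]
    _ = a * (n * (a⁻¹ * a)) := by rw [hc2]
    _ = a * n * a⁻¹ * a := by simp only [mul_assoc]
    _ = n * (a * a⁻¹) * a := by rw [key2]
    _ = n * a := by rw [mul_assoc, InverseSemigroup.mul_inv_mul]
end

section
/- Let A be a semilattice of abelian groups with an S-module structure (α, λ), where α : E(S) → E(A) is an isomorphism and λ : S → end A is a homomorphism satisfying λ_e(a) = α(e)a and λ_s(α(e)) = α(s e s⁻¹). Define β : A → S by β(a) = α⁻¹(a a⁻¹). Then (α, λ, β) is a crossed S-module structure on A; in particular the Peiffer identity λ_{β(a)}(a') = a a' a⁻¹ and equivariance β(λ_s(a)) = s β(a) s⁻¹ hold. -/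
open InverseSemigroup

section Helpers
variable {T : Type*} [InverseSemigroup T]

lemma my_inv_of_idem {e : T} (he : e * e = e) : e⁻¹ = e :=
  (InverseSemigroup.inv_unique e e (by rw [he, he]) (by rw [he, he])).symm

lemma my_idem_mul {e f : T} (he : e * e = e) (hf : f * f = f) :
    (e * f) * (e * f) = e * f := by
  have he' : ∀ t : T, e * (e * t) = e * t := fun t => by rw [← mul_assoc, he]
  have hf' : ∀ t : T, f * (f * t) = f * t := fun t => by rw [← mul_assoc, hf]
  have h1 : (e * f) * (e * f)⁻¹ * (e * f) = e * f := InverseSemigroup.mul_inv_mul _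
  have h2 : (e * f)⁻¹ * (e * f) * (e * f)⁻¹ = (e * f)⁻¹ := InverseSemigroup.inv_mul_inv _
  set x := (e * f)⁻¹ with hx
  have h2c : ∀ t : T, x * (e * (f * (x * t))) = x * t := fun t => by
    have := congrArg (· * t) h2
    simpa [mul_assoc] using this
  have hginv : f * (x * e) = x := by
    refine InverseSemigroup.inv_unique (e * f) (f * (x * e)) ?_ ?_
    · simp only [mul_assoc, he', hf']
      simpa [mul_assoc] using h1
    · simp only [mul_assoc, he', hf']
      rw [h2c e]
  have hxidem : x * x = x := by
    conv_lhs => rw [← hginv]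
    simp only [mul_assoc]
    rw [h2c e]; exact hginv
  have hef : e * f = x := by
    have h3 : e * f = x⁻¹ := InverseSemigroup.inv_unique x (e * f) h2 h1
    rw [h3, my_inv_of_idem hxidem]
  rw [hef]; exact hxidem

lemma my_idem_comm {e f : T} (he : e * e = e) (hf : f * f = f) :
    e * f = f * e := by
  have he' : ∀ t : T, e * (e * t) = e * t := fun t => by rw [← mul_assoc, he]
  have hf' : ∀ t : T, f * (f * t) = f * t := fun t => by rw [← mul_assoc, hf]
  have hef := my_idem_mul he hf
  have hfe := my_idem_mul hf he
  have h1 : f * e = (e * f)⁻¹ := by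
    refine InverseSemigroup.inv_unique (e * f) (f * e) ?_ ?_
    · simp only [mul_assoc, he', hf']
      simpa [mul_assoc] using hef
    · simp only [mul_assoc, he', hf']
      simpa [mul_assoc] using hfe
  rw [h1, my_inv_of_idem hef]

end Helpers

/-- An `S`-module structure `(α, λ)` on a semilattice of abelian groups `A`, together
with `β(a) = α⁻¹(a a⁻¹)`, is a crossed `S`-module: the Peiffer identity and the
equivariance of `β` hold. -/
theorem module_is_crossed_module {S A : Type*} [InverseSemigroup S] [InverseSemigroup A]
    (hAcomm : ∀ a b : A, a * b = b * a)
    (α : S → A)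
    (hαmap : ∀ e ∈ E S, α e ∈ E A)
    (hαinj : ∀ e ∈ E S, ∀ f ∈ E S, α e = α f → e = f)
    (hαsurj : ∀ a ∈ E A, ∃ e ∈ E S, α e = a)
    (hαmul : ∀ e ∈ E S, ∀ f ∈ E S, α (e * f) = α e * α f)
    (lam : S → A → A)
    (hlamhom : ∀ s t : S, ∀ a : A, lam (s * t) a = lam s (lam t a))
    (hlammul : ∀ s : S, ∀ a b : A, lam s (a * b) = lam s a * lam s b)
    (hCM1 : ∀ e ∈ E S, ∀ a : A, lam e a = α e * a)
    (hCM2 : ∀ s : S, ∀ e ∈ E S, lam s (α e) = α (s * e * s⁻¹))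
    (β : A → S)
    (hβE : ∀ a : A, β a ∈ E S)
    (hβdef : ∀ a : A, α (β a) = a * a⁻¹) :
    (∀ a a' : A, lam (β a) a' = a * a' * a⁻¹) ∧
    (∀ s : S, ∀ a : A, β (lam s a) = s * β a * s⁻¹) := by
  constructor
  · intro a a'
    rw [hCM1 (β a) (hβE a) a', hβdef a, mul_assoc, hAcomm a⁻¹ a', ← mul_assoc]
  · intro s a
    have hee : β a * β a = β a := hβE a
    have hss : (s⁻¹ * s) * (s⁻¹ * s) = s⁻¹ * s := by
      rw [← mul_assoc, InverseSemigroup.inv_mul_inv]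
    have he' : ∀ t : S, β a * (β a * t) = β a * t := fun t => by rw [← mul_assoc, hee]
    have hcomm' : ∀ t : S, β a * (s⁻¹ * (s * t)) = s⁻¹ * (s * (β a * t)) := fun t => by
      have := congrArg (· * t) (my_idem_comm hee hss)
      simpa [mul_assoc] using this
    have hmic : ∀ t : S, s * (s⁻¹ * (s * t)) = s * t := fun t => by
      have := congrArg (· * t) (InverseSemigroup.mul_inv_mul s)
      simpa [mul_assoc] using this
    have hconj : s * β a * s⁻¹ ∈ E S := by
      show (s * β a * s⁻¹) * (s * β a * s⁻¹) = s * β a * s⁻¹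
      simp only [mul_assoc]
      rw [hcomm' (β a * s⁻¹), he', hmic]
    have hlaminv : lam s a⁻¹ = (lam s a)⁻¹ := by
      refine InverseSemigroup.inv_unique (lam s a) (lam s a⁻¹) ?_ ?_
      · rw [← hlammul, ← hlammul, InverseSemigroup.mul_inv_mul]
      · rw [← hlammul, ← hlammul, InverseSemigroup.inv_mul_inv]
    refine hαinj _ (hβE _) _ hconj ?_
    calc α (β (lam s a)) = lam s a * (lam s a)⁻¹ := hβdef _
      _ = lam s a * lam s a⁻¹ := by rw [hlaminv]
      _ = lam s (a * a⁻¹) := (hlammul s a a⁻¹).symm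
      _ = lam s (α (β a)) := by rw [hβdef]
      _ = α (s * β a * s⁻¹) := hCM2 s (β a) (hβE a)
end

section
/- Let π : S → T be an idempotent-separating epimorphism of inverse semigroups and ρ : T → S a transversal of π. The following are equivalent: (1) ρ is order-preserving (x ≤ y implies ρ(x) ≤ ρ(y)) and respects idempotents; (2) ρ(e x) = ρ(e)ρ(x) for all e ∈ E(T), x ∈ T; (3) ρ(x e) = ρ(x)ρ(e) for all e ∈ E(T), x ∈ T. -/
open InverseSemigroup

namespace InverseSemigroup

variable {S : Type*} [InverseSemigroup S]

lemma mem_E {e : S} (h : e * e = e) : e ∈ E S := h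
lemma E_mul {e : S} (h : e ∈ E S) : e * e = e := h

lemma inv_invol (s : S) : s⁻¹⁻¹ = s :=
  (inv_unique s⁻¹ s (inv_mul_inv s) (mul_inv_mul s)).symm

lemma idem_self_inv {e : S} (he : e ∈ E S) : e⁻¹ = e := by
  have h : e * e * e = e := by rw [E_mul he, E_mul he]
  exact (inv_unique e e h h).symm

lemma mul_inv_idem (s : S) : s * s⁻¹ ∈ E S := by
  show s * s⁻¹ * (s * s⁻¹) = s * s⁻¹
  rw [← mul_assoc, mul_inv_mul]

lemma inv_mul_idem (s : S) : s⁻¹ * s ∈ E S := by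
  show s⁻¹ * s * (s⁻¹ * s) = s⁻¹ * s
  rw [← mul_assoc, inv_mul_inv]

lemma mim (s t : S) : s * (s⁻¹ * (s * t)) = s * t := by
  rw [← mul_assoc, ← mul_assoc, mul_inv_mul]
lemma mim₀ (s : S) : s * (s⁻¹ * s) = s := by rw [← mul_assoc, mul_inv_mul]
lemma imi (s t : S) : s⁻¹ * (s * (s⁻¹ * t)) = s⁻¹ * t := by
  rw [← mul_assoc, ← mul_assoc, inv_mul_inv]
lemma imi₀ (s : S) : s⁻¹ * (s * s⁻¹) = s⁻¹ := by rw [← mul_assoc, inv_mul_inv]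

lemma idem_cancel {e : S} (he : e ∈ E S) : ∀ t : S, e * (e * t) = e * t := by
  intro t; rw [← mul_assoc, E_mul he]

lemma idem_mul_mem {e f : S} (he : e ∈ E S) (hf : f ∈ E S) : e * f ∈ E S := by
  have he' := idem_cancel he
  have hf' := idem_cancel hf
  set x := (e * f)⁻¹ with hx
  have h1 : (e * f) * x * (e * f) = e * f := mul_inv_mul _
  have h2 : x * (e * f) * x = x := inv_mul_inv _
  simp only [mul_assoc] at h1 h2
  have h2' : x * (e * (f * (x * e))) = x * e := by
    have := congrArg (· * e) h2
    simp only [mul_assoc] at this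
    exact this
  have key : f * (x * e) = x := by
    have hA : (e * f) * (f * (x * e)) * (e * f) = e * f := by
      simp only [mul_assoc, he', hf']; exact h1
    have hB : (f * (x * e)) * (e * f) * (f * (x * e)) = f * (x * e) := by
      simp only [mul_assoc, he', hf']
      rw [h2']
    have := inv_unique (e * f) (f * (x * e)) (by rw [← mul_assoc] at hA ⊢; exact hA)
      (by rw [← mul_assoc] at hB ⊢; exact hB)
    rw [← hx] at this; exact this
  have hxidem : x ∈ E S := by
    show x * x = x
    conv_lhs => rw [← key]
    rw [mul_assoc, mul_assoc, h2']; exact key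
  have : e * f = x⁻¹ := by rw [hx, inv_invol]
  rw [this, idem_self_inv hxidem]; exact hxidem

lemma idem_comm {e f : S} (he : e ∈ E S) (hf : f ∈ E S) : e * f = f * e := by
  have hef := idem_mul_mem he hf
  have hfe := idem_mul_mem hf he
  have he' := idem_cancel he
  have hf' := idem_cancel hf
  have h1 : (e * f) * (f * e) * (e * f) = e * f := by
    have := E_mul hef
    simp only [mul_assoc] at this ⊢
    simp only [he', hf']
    exact this
  have h2 : (f * e) * (e * f) * (f * e) = f * e := by
    have := E_mul hfe
    simp only [mul_assoc] at this ⊢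
    simp only [he', hf']
    exact this
  have := inv_unique (e * f) (f * e) h1 h2
  rw [idem_self_inv hef] at this
  exact this.symm

lemma sandwich (a b : S) : a * b * (b⁻¹ * a⁻¹) * (a * b) = a * b := by
  have hc : (a⁻¹ * a) * (b * b⁻¹) = (b * b⁻¹) * (a⁻¹ * a) :=
    idem_comm (inv_mul_idem a) (mul_inv_idem b)
  calc a * b * (b⁻¹ * a⁻¹) * (a * b)
      = a * ((b * b⁻¹) * ((a⁻¹ * a) * b)) := by simp only [mul_assoc]
    _ = a * ((a⁻¹ * a) * ((b * b⁻¹) * b)) := by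
        rw [← mul_assoc (b * b⁻¹), ← hc, mul_assoc]
    _ = a * ((a⁻¹ * a) * b) := by rw [mul_inv_mul]
    _ = a * b := by rw [← mul_assoc, mim₀]

lemma mul_inv_rev' (a b : S) : (a * b)⁻¹ = b⁻¹ * a⁻¹ := by
  have h1 := sandwich a b
  have h2 := sandwich b⁻¹ a⁻¹
  rw [inv_invol, inv_invol] at h2
  exact (inv_unique (a * b) (b⁻¹ * a⁻¹) h1 h2).symm

lemma nle_of_left_idem {e s t : S} (he : e ∈ E S) (h : s = e * t) : nle s t := by
  have hc : (t * t⁻¹) * e = e * (t * t⁻¹) := idem_comm (mul_inv_idem t) he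
  have he' := idem_cancel he
  unfold nle
  rw [h, mul_inv_rev', idem_self_inv he]
  symm
  calc e * t * (t⁻¹ * e) * t
      = e * ((t * t⁻¹) * e * t) := by simp only [mul_assoc]
    _ = e * (e * (t * t⁻¹) * t) := by rw [hc]
    _ = e * t := by
        rw [mul_assoc, he', mul_inv_mul]

lemma nle_of_right_idem {e s t : S} (he : e ∈ E S) (h : s = t * e) : nle s t := by
  have hc : (t⁻¹ * t) * e = e * (t⁻¹ * t) := idem_comm (inv_mul_idem t) he
  unfold nle
  rw [h, mul_inv_rev', idem_self_inv he]
  symm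
  calc t * e * (e * t⁻¹) * t
      = t * (e * (e * (t⁻¹ * t))) := by simp only [mul_assoc]
    _ = t * (e * (t⁻¹ * t)) := by rw [idem_cancel he]
    _ = t * ((t⁻¹ * t) * e) := by rw [← hc]
    _ = t * e := by rw [← mul_assoc, mim₀]

lemma nle_right {s t : S} (h : nle s t) : s = t * (s⁻¹ * s) := by
  have h' : s = s * s⁻¹ * t := h
  have step1 : t * t⁻¹ * s = s := by
    have hc : (t * t⁻¹) * (s * s⁻¹) = (s * s⁻¹) * (t * t⁻¹) :=
      idem_comm (mul_inv_idem t) (mul_inv_idem s)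
    calc t * t⁻¹ * s = t * t⁻¹ * (s * s⁻¹ * t) := by rw [← h']
      _ = (s * s⁻¹) * ((t * t⁻¹) * t) := by
          rw [← mul_assoc, hc, mul_assoc]
      _ = s * s⁻¹ * t := by rw [mul_inv_mul]
      _ = s := h'.symm
  have step2 : s⁻¹ = t⁻¹ * (s * s⁻¹) := by
    conv_lhs => rw [h']
    rw [mul_inv_rev', idem_self_inv (mul_inv_idem s)]
  calc s = t * t⁻¹ * s := step1.symm
    _ = t * (t⁻¹ * (s * (s⁻¹ * s))) := by rw [mim₀]; simp only [mul_assoc]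
    _ = t * ((t⁻¹ * (s * s⁻¹)) * s) := by simp only [mul_assoc]
    _ = t * (s⁻¹ * s) := by rw [← step2]

/-- If `f (s s⁻¹) = g (s s⁻¹)` then `f s = g s`. -/
lemma left_trick {f g s : S} (h : f * (s * s⁻¹) = g * (s * s⁻¹)) : f * s = g * s := by
  calc f * s = (f * (s * s⁻¹)) * s := by rw [mul_assoc, mul_inv_mul]
    _ = (g * (s * s⁻¹)) * s := by rw [h]
    _ = g * s := by rw [mul_assoc, mul_inv_mul]

/-- If `(s⁻¹ s) f = (s⁻¹ s) g` then `s f = s g`. -/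
lemma right_trick {f g s : S} (h : (s⁻¹ * s) * f = (s⁻¹ * s) * g) : s * f = s * g := by
  calc s * f = s * ((s⁻¹ * s) * f) := by rw [← mul_assoc, mim₀]
    _ = s * ((s⁻¹ * s) * g) := by rw [h]
    _ = s * g := by rw [← mul_assoc, mim₀]

lemma left_T_calc {e x : S} (he : e ∈ E S) :
    (e * x) * (e * x)⁻¹ * (x * x⁻¹) = e * (x * x⁻¹) := by
  have hc : (x * x⁻¹) * e = e * (x * x⁻¹) := idem_comm (mul_inv_idem x) he
  calc (e * x) * (e * x)⁻¹ * (x * x⁻¹)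
      = e * x * (x⁻¹ * e) * (x * x⁻¹) := by rw [mul_inv_rev', idem_self_inv he]
    _ = e * ((x * x⁻¹) * (e * (x * x⁻¹))) := by simp only [mul_assoc]
    _ = e * (e * ((x * x⁻¹) * (x * x⁻¹))) := by
        rw [← mul_assoc (x * x⁻¹) e, hc, mul_assoc]
    _ = e * (x * x⁻¹) := by rw [E_mul (mul_inv_idem x), idem_cancel he]

lemma right_T_calc {e x : S} (he : e ∈ E S) :
    (x⁻¹ * x) * ((x * e)⁻¹ * (x * e)) = (x⁻¹ * x) * e := by
  have hc : (x⁻¹ * x) * e = e * (x⁻¹ * x) := idem_comm (inv_mul_idem x) he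
  calc (x⁻¹ * x) * ((x * e)⁻¹ * (x * e))
      = (x⁻¹ * x) * ((e * x⁻¹) * (x * e)) := by rw [mul_inv_rev', idem_self_inv he]
    _ = (x⁻¹ * x) * (e * ((x⁻¹ * x) * e)) := by simp only [mul_assoc]
    _ = (x⁻¹ * x) * (e * (e * (x⁻¹ * x))) := by rw [hc]
    _ = (x⁻¹ * x) * ((x⁻¹ * x) * e) := by rw [idem_cancel he, ← hc]
    _ = (x⁻¹ * x) * e := by rw [idem_cancel (inv_mul_idem x)]

end InverseSemigroup

/-- For a transversal `ρ` of an idempotent-separating epimorphism `π`, being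
order-preserving and idempotent-respecting is equivalent to `ρ(e x) = ρ(e) ρ(x)`,
and also to `ρ(x e) = ρ(x) ρ(e)`. -/
theorem transversal_order_preserving_tfae {S T : Type*} [InverseSemigroup S] [InverseSemigroup T]
    (π : S → T) (hπ : ∀ a b : S, π (a * b) = π a * π b)
    (hsurj : Function.Surjective π)
    (hsep : ∀ a ∈ E S, ∀ b ∈ E S, π a = π b → a = b)
    (ρ : T → S) (hρ : ∀ t : T, π (ρ t) = t) :
    (((∀ x y : T, nle x y → nle (ρ x) (ρ y)) ∧ (∀ e ∈ E T, ρ e ∈ E S)) ↔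
      (∀ e ∈ E T, ∀ x : T, ρ (e * x) = ρ e * ρ x)) ∧
    (((∀ x y : T, nle x y → nle (ρ x) (ρ y)) ∧ (∀ e ∈ E T, ρ e ∈ E S)) ↔
      (∀ e ∈ E T, ∀ x : T, ρ (x * e) = ρ x * ρ e)) := by
  have hπinv : ∀ a : S, π a⁻¹ = (π a)⁻¹ := by
    intro a
    apply InverseSemigroup.inv_unique
    · rw [← hπ, ← hπ, InverseSemigroup.mul_inv_mul]
    · rw [← hπ, ← hπ, InverseSemigroup.inv_mul_inv]
  constructor
  · constructor
    · rintro ⟨hord, hE⟩ e he x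
      have ha : ρ (e * x) = ρ (e * x) * (ρ (e * x))⁻¹ * ρ x :=
        hord _ _ (nle_of_left_idem he rfl)
      have hπeq : π (ρ e * (ρ x * (ρ x)⁻¹)) =
          π ((ρ (e * x) * (ρ (e * x))⁻¹) * (ρ x * (ρ x)⁻¹)) := by
        simp only [hπ, hπinv, hρ]
        exact (left_T_calc he).symm
      have heq : ρ e * (ρ x * (ρ x)⁻¹) =
          (ρ (e * x) * (ρ (e * x))⁻¹) * (ρ x * (ρ x)⁻¹) :=
        hsep _ (idem_mul_mem (hE e he) (mul_inv_idem _)) _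
          (idem_mul_mem (mul_inv_idem _) (mul_inv_idem _)) hπeq
      have h2 := left_trick heq
      rw [h2]; exact ha
    · intro h
      have hE : ∀ e ∈ E T, ρ e ∈ E S := by
        intro e he
        show ρ e * ρ e = ρ e
        rw [← h e he e, E_mul he]
      refine ⟨?_, hE⟩
      intro x y hxy
      have h2 := h (x * x⁻¹) (mul_inv_idem x) y
      rw [← (show x = x * x⁻¹ * y from hxy)] at h2
      exact nle_of_left_idem (hE _ (mul_inv_idem x)) h2
  · constructor
    · rintro ⟨hord, hE⟩ e he x
      have ha : ρ (x * e) = ρ x * ((ρ (x * e))⁻¹ * ρ (x * e)) :=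
        nle_right (hord _ _ (nle_of_right_idem he rfl))
      have hπeq : π ((ρ x)⁻¹ * ρ x * ρ e) =
          π ((ρ x)⁻¹ * ρ x * ((ρ (x * e))⁻¹ * ρ (x * e))) := by
        simp only [hπ, hπinv, hρ]
        exact (right_T_calc he).symm
      have heq : (ρ x)⁻¹ * ρ x * ρ e =
          (ρ x)⁻¹ * ρ x * ((ρ (x * e))⁻¹ * ρ (x * e)) :=
        hsep _ (idem_mul_mem (inv_mul_idem _) (hE e he)) _
          (idem_mul_mem (inv_mul_idem _) (inv_mul_idem _)) hπeq
      have h2 := right_trick heq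
      rw [h2]; exact ha
    · intro h
      have hE : ∀ e ∈ E T, ρ e ∈ E S := by
        intro e he
        show ρ e * ρ e = ρ e
        rw [← h e he e, E_mul he]
      refine ⟨?_, hE⟩
      intro x y hxy
      have h2 := h (x⁻¹ * x) (inv_mul_idem x) y
      rw [← nle_right hxy] at h2
      exact nle_of_right_idem (hE _ (inv_mul_idem x)) h2
end

section
/- Let π : S → T be an idempotent-separating epimorphism of inverse semigroups and ρ an order-preserving transversal of π that respects idempotents. Then for all e ∈ E(T), x ∈ T and ε ∈ {−1, 1}: ρ(x)^ε ρ(e) = ρ(x^ε e x^{−ε}) ρ(x)^ε. -/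
open InverseSemigroup

namespace TCHelper

variable {S : Type*} [InverseSemigroup S]

lemma mim (s : S) : s * s⁻¹ * s = s := InverseSemigroup.mul_inv_mul s
lemma imi (s : S) : s⁻¹ * s * s⁻¹ = s⁻¹ := InverseSemigroup.inv_mul_inv s

lemma idm {e : S} (he : e * e = e) (t : S) : e * (e * t) = e * t := by
  rw [← mul_assoc, he]

lemma inv_inv'' (s : S) : s⁻¹⁻¹ = s :=
  (InverseSemigroup.inv_unique s⁻¹ s (imi s) (mim s)).symm

lemma idem_inv {e : S} (he : e * e = e) : e⁻¹ = e :=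
  (InverseSemigroup.inv_unique e e (by rw [he, he]) (by rw [he, he])).symm

lemma mul_inv_idem (a : S) : (a * a⁻¹) * (a * a⁻¹) = a * a⁻¹ := by
  have := congrArg (· * a⁻¹) (mim a)
  simpa [mul_assoc] using this

lemma inv_mul_idem (a : S) : (a⁻¹ * a) * (a⁻¹ * a) = a⁻¹ * a := by
  have := congrArg (· * a) (imi a)
  simpa [mul_assoc] using this

lemma idem_mul {e f : S} (he : e * e = e) (hf : f * f = f) :
    (e * f) * (e * f) = e * f := by
  have hx1 : (e * f) * (e * f)⁻¹ * (e * f) = e * f := mim _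
  have hx2 : (e * f)⁻¹ * (e * f) * (e * f)⁻¹ = (e * f)⁻¹ := imi _
  set x := (e * f)⁻¹ with hx
  have A : (e * f) * (f * x * e) * (e * f) = e * f := by
    simp only [mul_assoc] at hx1 ⊢
    rw [idm hf, idm he]
    exact hx1
  have B : (f * x * e) * (e * f) * (f * x * e) = f * x * e := by
    have hx2' := congrArg (· * e) hx2
    simp only [mul_assoc] at hx2' ⊢
    rw [idm he, idm hf]
    rw [show e * (f * (x * e)) = e * (f * x) * e from by simp only [mul_assoc]] at hx2' ⊢
    rw [hx2']
  have hxfe : f * x * e = x := InverseSemigroup.inv_unique (e * f) (f * x * e) A B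
  have hxx : x * x = x := by
    calc x * x = (f * x * e) * (f * x * e) := by rw [hxfe]
      _ = f * (x * (e * f) * x) * e := by simp only [mul_assoc]
      _ = f * x * e := by rw [hx2]
      _ = x := hxfe
  have hef : e * f = x := by
    rw [← idem_inv hxx]
    exact (inv_inv'' (e * f)).symm
  rw [hef, hxx]

lemma idem_comm {e f : S} (he : e * e = e) (hf : f * f = f) :
    e * f = f * e := by
  have hef := idem_mul he hf
  have hfe := idem_mul hf he
  have A : (e * f) * (f * e) * (e * f) = e * f := by
    simp only [mul_assoc] at hef ⊢
    rw [idm hf, idm he]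
    exact hef
  have B : (f * e) * (e * f) * (f * e) = f * e := by
    simp only [mul_assoc] at hfe ⊢
    rw [idm he, idm hf]
    exact hfe
  have := InverseSemigroup.inv_unique (e * f) (f * e) A B
  rw [this, idem_inv hef]

lemma mul_inv_rev (a b : S) : (a * b)⁻¹ = b⁻¹ * a⁻¹ := by
  have A : (a * b) * (b⁻¹ * a⁻¹) * (a * b) = a * b := by
    calc (a * b) * (b⁻¹ * a⁻¹) * (a * b)
        = a * ((b * b⁻¹) * (a⁻¹ * a)) * b := by simp only [mul_assoc]
      _ = a * ((a⁻¹ * a) * (b * b⁻¹)) * b := by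
          rw [idem_comm (mul_inv_idem b) (inv_mul_idem a)]
      _ = (a * a⁻¹ * a) * (b * b⁻¹ * b) := by simp only [mul_assoc]
      _ = a * b := by rw [mim, mim]
  have B : (b⁻¹ * a⁻¹) * (a * b) * (b⁻¹ * a⁻¹) = b⁻¹ * a⁻¹ := by
    calc (b⁻¹ * a⁻¹) * (a * b) * (b⁻¹ * a⁻¹)
        = b⁻¹ * ((a⁻¹ * a) * (b * b⁻¹)) * a⁻¹ := by simp only [mul_assoc]
      _ = b⁻¹ * ((b * b⁻¹) * (a⁻¹ * a)) * a⁻¹ := by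
          rw [idem_comm (inv_mul_idem a) (mul_inv_idem b)]
      _ = (b⁻¹ * b * b⁻¹) * (a⁻¹ * a * a⁻¹) := by simp only [mul_assoc]
      _ = b⁻¹ * a⁻¹ := by rw [imi, imi]
  exact (InverseSemigroup.inv_unique (a * b) (b⁻¹ * a⁻¹) A B).symm

lemma hom_inv {T : Type*} [InverseSemigroup T] (π : S → T)
    (hπ : ∀ a b : S, π (a * b) = π a * π b) (a : S) : π a⁻¹ = (π a)⁻¹ :=
  InverseSemigroup.inv_unique (π a) (π a⁻¹) (by rw [← hπ, ← hπ, mim]) (by rw [← hπ, ← hπ, imi])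

/-- The conjugate of an idempotent is idempotent. -/
lemma conj_idem {e : S} (he : e * e = e) (x : S) :
    (x * e * x⁻¹) * (x * e * x⁻¹) = x * e * x⁻¹ := by
  calc (x * e * x⁻¹) * (x * e * x⁻¹)
      = x * (e * (x⁻¹ * x)) * (e * x⁻¹) := by simp only [mul_assoc]
    _ = x * ((x⁻¹ * x) * e) * (e * x⁻¹) := by rw [idem_comm he (inv_mul_idem x)]
    _ = (x * x⁻¹ * x) * ((e * e) * x⁻¹) := by simp only [mul_assoc]
    _ = x * e * x⁻¹ := by rw [mim, he, ← mul_assoc]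

lemma conj_absorb {e : S} (he : e * e = e) (x : S) :
    (x * e * x⁻¹) * x = x * e := by
  calc (x * e * x⁻¹) * x
      = x * (e * (x⁻¹ * x)) := by simp only [mul_assoc]
    _ = x * ((x⁻¹ * x) * e) := by rw [idem_comm he (inv_mul_idem x)]
    _ = (x * x⁻¹ * x) * e := by simp only [mul_assoc]
    _ = x * e := by rw [mim]

/-- If `k, g` are idempotents and `π (a * k) = π (g * a)` for an
idempotent-separating homomorphism `π`, then `a * k = g * a`. -/
lemma key {T : Type*} [InverseSemigroup T]
    (π : S → T) (hπ : ∀ a b : S, π (a * b) = π a * π b)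
    (hsep : ∀ a ∈ E S, ∀ b ∈ E S, π a = π b → a = b)
    (a k g : S) (hk : k * k = k) (hg : g * g = g)
    (him : π (a * k) = π (g * a)) : a * k = g * a := by
  have hs : (a * k) * (a * k)⁻¹ * a = a * k := by
    rw [mul_inv_rev, idem_inv hk]
    calc a * k * (k * a⁻¹) * a
        = a * (k * k) * (a⁻¹ * a) := by simp only [mul_assoc]
      _ = a * (k * (a⁻¹ * a)) := by rw [hk, mul_assoc]
      _ = a * ((a⁻¹ * a) * k) := by rw [idem_comm hk (inv_mul_idem a)]
      _ = (a * a⁻¹ * a) * k := by simp only [mul_assoc]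
      _ = a * k := by rw [mim]
  have ht : (g * a) * (g * a)⁻¹ * a = g * a := by
    rw [mul_inv_rev, idem_inv hg]
    calc g * a * (a⁻¹ * g) * a
        = g * ((a * a⁻¹) * g) * a := by simp only [mul_assoc]
      _ = g * (g * (a * a⁻¹)) * a := by rw [idem_comm (mul_inv_idem a) hg]
      _ = (g * g) * (a * a⁻¹ * a) := by simp only [mul_assoc]
      _ = g * a := by rw [hg, mim]
  have heq : (a * k) * (a * k)⁻¹ = (g * a) * (g * a)⁻¹ := by
    refine hsep _ (mul_inv_idem _) _ (mul_inv_idem _) ?_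
    rw [hπ (a * k) (a * k)⁻¹, hπ (g * a) (g * a)⁻¹,
      hom_inv π hπ (a * k), hom_inv π hπ (g * a), him]
  calc a * k = (a * k) * (a * k)⁻¹ * a := hs.symm
    _ = (g * a) * (g * a)⁻¹ * a := by rw [heq]
    _ = g * a := ht

end TCHelper

open TCHelper

/-- For an order-preserving, idempotent-respecting transversal `ρ` of an
idempotent-separating epimorphism, `ρ(x)^ε ρ(e) = ρ(x^ε e x^{-ε}) ρ(x)^ε` for
`ε ∈ {-1, 1}`. -/
theorem transversal_conj_idempotent {S T : Type*} [InverseSemigroup S] [InverseSemigroup T]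
    (π : S → T) (hπ : ∀ a b : S, π (a * b) = π a * π b)
    (hsurj : Function.Surjective π)
    (hsep : ∀ a ∈ E S, ∀ b ∈ E S, π a = π b → a = b)
    (ρ : T → S) (hρ : ∀ t : T, π (ρ t) = t)
    (hρE : ∀ e ∈ E T, ρ e ∈ E S)
    (hord : ∀ x y : T, nle x y → nle (ρ x) (ρ y)) :
    ∀ e ∈ E T, ∀ x : T,
      ρ x * ρ e = ρ (x * e * x⁻¹) * ρ x ∧
      (ρ x)⁻¹ * ρ e = ρ (x⁻¹ * e * x) * (ρ x)⁻¹ := by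
  intro e he x
  have he' : e * e = e := he
  have hk : ρ e * ρ e = ρ e := hρE e he
  have hc1 : (x * e * x⁻¹) * (x * e * x⁻¹) = x * e * x⁻¹ := conj_idem he' x
  have hc2 : (x⁻¹ * e * x) * (x⁻¹ * e * x) = x⁻¹ * e * x := by
    have h := conj_idem he' x⁻¹
    rwa [inv_inv''] at h
  have hg1 : ρ (x * e * x⁻¹) * ρ (x * e * x⁻¹) = ρ (x * e * x⁻¹) := hρE _ hc1
  have hg2 : ρ (x⁻¹ * e * x) * ρ (x⁻¹ * e * x) = ρ (x⁻¹ * e * x) := hρE _ hc2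
  have hT2 : (x⁻¹ * e * x) * x⁻¹ = x⁻¹ * e := by
    have h := conj_absorb he' x⁻¹
    rwa [inv_inv''] at h
  constructor
  · refine key π hπ hsep (ρ x) (ρ e) (ρ (x * e * x⁻¹)) hk hg1 ?_
    rw [hπ, hπ, hρ, hρ, hρ, conj_absorb he' x]
  · refine key π hπ hsep (ρ x)⁻¹ (ρ e) (ρ (x⁻¹ * e * x)) hk hg2 ?_
    rw [hπ, hπ, hom_inv π hπ, hρ, hρ, hρ, hT2]
end

section
/- Let T be an inverse semigroup and c ∈ Z³_≤(T¹, A¹) an order-preserving 3-cocycle with values in a T-module A. Then for any t ∈ T and idempotents e, f ∈ E(T), one has c(e, t, f) = θ(e t f t⁻¹). -/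
open InverseSemigroup

namespace Aux
open InverseSemigroup
variable {S : Type*} [InverseSemigroup S]

lemma inv_invol (s : S) : s⁻¹⁻¹ = s :=
  (inv_unique s⁻¹ s (inv_mul_inv s) (mul_inv_mul s)).symm

lemma idem_inv {e : S} (he : e * e = e) : e⁻¹ = e :=
  (InverseSemigroup.inv_unique e e (by rw [he, he]) (by rw [he, he])).symm

lemma rr_idem (s : S) : (s * s⁻¹) * (s * s⁻¹) = s * s⁻¹ := by
  rw [← mul_assoc, mul_inv_mul]

lemma ll_idem (s : S) : (s⁻¹ * s) * (s⁻¹ * s) = s⁻¹ * s := by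
  have := rr_idem s⁻¹; rwa [inv_invol] at this

lemma idem_mul {e f : S} (he : e * e = e) (hf : f * f = f) :
    (e * f) * (e * f) = e * f := by
  have hf2 : ∀ x : S, f * (f * x) = f * x := fun x => by rw [← mul_assoc, hf]
  have he2 : ∀ x : S, e * (e * x) = e * x := fun x => by rw [← mul_assoc, he]
  have h1 : f * (e * f)⁻¹ * e = (e * f)⁻¹ := by
    apply InverseSemigroup.inv_unique
    · have key : (e * f) * (f * (e * f)⁻¹ * e) * (e * f)
          = (e * f) * (e * f)⁻¹ * (e * f) := by
        simp only [mul_assoc, hf2, he2]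
      rw [key, mul_inv_mul]
    · have key : (f * (e * f)⁻¹ * e) * (e * f) * (f * (e * f)⁻¹ * e)
          = f * ((e * f)⁻¹ * (e * f) * (e * f)⁻¹) * e := by
        simp only [mul_assoc, hf2, he2]
      rw [key, inv_mul_inv]
  have hxx : (e * f)⁻¹ * (e * f)⁻¹ = (e * f)⁻¹ := by
    calc (e * f)⁻¹ * (e * f)⁻¹
        = (f * (e * f)⁻¹ * e) * (f * (e * f)⁻¹ * e) := by rw [h1]
      _ = f * ((e * f)⁻¹ * (e * f) * (e * f)⁻¹) * e := by simp only [mul_assoc]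
      _ = f * (e * f)⁻¹ * e := by rw [inv_mul_inv]
      _ = (e * f)⁻¹ := h1
  have h2 : e * f = (e * f)⁻¹ := (inv_invol (e * f)).symm.trans (idem_inv hxx)
  rw [h2]; exact hxx

lemma idem_comm {e f : S} (he : e * e = e) (hf : f * f = f) : e * f = f * e := by
  have hf2 : ∀ x : S, f * (f * x) = f * x := fun x => by rw [← mul_assoc, hf]
  have he2 : ∀ x : S, e * (e * x) = e * x := fun x => by rw [← mul_assoc, he]
  have hef := idem_mul he hf
  have hfe := idem_mul hf he
  have h3 : f * e = (e * f)⁻¹ := by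
    apply InverseSemigroup.inv_unique
    · have key : (e * f) * (f * e) * (e * f) = (e * f) * (e * f) := by
        simp only [mul_assoc, hf2, he2]
      rw [key, hef]
    · have key : (f * e) * (e * f) * (f * e) = (f * e) * (f * e) := by
        simp only [mul_assoc, hf2, he2]
      rw [key, hfe]
  exact (h3.trans (idem_inv hef)).symm

lemma mul_inv_rev (s t : S) : (s * t)⁻¹ = t⁻¹ * s⁻¹ := by
  have hcm : (t * t⁻¹) * (s⁻¹ * s) = (s⁻¹ * s) * (t * t⁻¹) :=
    idem_comm (rr_idem t) (ll_idem s)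
  refine (InverseSemigroup.inv_unique _ _ ?_ ?_).symm
  · calc (s * t) * (t⁻¹ * s⁻¹) * (s * t)
        = s * ((t * t⁻¹) * (s⁻¹ * s) * t) := by simp only [mul_assoc]
      _ = s * ((s⁻¹ * s) * (t * t⁻¹) * t) := by rw [hcm]
      _ = s * t := by
          rw [mul_assoc (s⁻¹ * s), InverseSemigroup.mul_inv_mul, ← mul_assoc,
            ← mul_assoc, InverseSemigroup.mul_inv_mul]
  · calc (t⁻¹ * s⁻¹) * (s * t) * (t⁻¹ * s⁻¹)
        = t⁻¹ * ((s⁻¹ * s) * (t * t⁻¹) * s⁻¹) := by simp only [mul_assoc]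
      _ = t⁻¹ * ((t * t⁻¹) * (s⁻¹ * s) * s⁻¹) := by rw [← hcm]
      _ = t⁻¹ * s⁻¹ := by
          rw [mul_assoc (t * t⁻¹), InverseSemigroup.inv_mul_inv, ← mul_assoc,
            ← mul_assoc, InverseSemigroup.inv_mul_inv]

open InverseSemigroup in
lemma nle_idem_mul_left {e : S} (he : e * e = e) (s : S) : nle (e * s) s := by
  show e * s = (e * s) * (e * s)⁻¹ * s
  rw [mul_inv_rev, idem_inv he]
  have hsw : (s * s⁻¹) * e = e * (s * s⁻¹) := idem_comm (rr_idem s) he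
  symm
  calc (e * s) * (s⁻¹ * e) * s
      = e * ((s * s⁻¹) * e * s) := by simp only [mul_assoc]
    _ = e * (e * (s * s⁻¹) * s) := by rw [hsw]
    _ = e * s := by
        rw [mul_assoc e (s * s⁻¹) s, InverseSemigroup.mul_inv_mul, ← mul_assoc, he]

open InverseSemigroup in
lemma nle_idem_mul_right {e : S} (he : e * e = e) (s : S) : nle (s * e) s := by
  show s * e = (s * e) * (s * e)⁻¹ * s
  rw [mul_inv_rev, idem_inv he]
  have he2 : ∀ x : S, e * (e * x) = e * x := fun x => by rw [← mul_assoc, he]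
  symm
  calc (s * e) * (e * s⁻¹) * s
      = s * (e * (s⁻¹ * s)) := by simp only [mul_assoc, he2]
    _ = s * ((s⁻¹ * s) * e) := by rw [idem_comm he (ll_idem s)]
    _ = s * e := by rw [← mul_assoc, ← mul_assoc, InverseSemigroup.mul_inv_mul]

open InverseSemigroup in
lemma nle_refl (x : S) : nle x x := (InverseSemigroup.mul_inv_mul x).symm

end Aux



/-- For an order-preserving 3-cocycle `c`, one has `c(e,t,f) = θ(e t f t⁻¹)` for
idempotents `e, f`. -/
theorem cocycle_idempotent_middle {T A : Type*} [InverseSemigroup T] [InverseSemigroup A]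
    (θ : T → A) (η : T → A → A)
    (hAcomm : ∀ a b : A, a * b = b * a)
    (hθE : ∀ e ∈ E T, θ e ∈ E A)
    (hθinj : ∀ e ∈ E T, ∀ f ∈ E T, θ e = θ f → e = f)
    (hθsurj : ∀ a ∈ E A, ∃ e ∈ E T, θ e = a)
    (hθmul : ∀ e ∈ E T, ∀ f ∈ E T, θ (e * f) = θ e * θ f)
    (hηhom : ∀ t u : T, ∀ a : A, η (t * u) a = η t (η u a))
    (hηmul : ∀ t : T, ∀ a b : A, η t (a * b) = η t a * η t b)
    (hη1 : ∀ e ∈ E T, ∀ a : A, η e a = θ e * a)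
    (hη2 : ∀ t : T, ∀ e ∈ E T, η t (θ e) = θ (t * e * t⁻¹))
    (c : T → T → T → A)
    (hc : ∀ x y z : T, c x y z * (c x y z)⁻¹ = θ (r (x * y * z)))
    (hcoc : ∀ x y z w : T,
      η x (c y z w) * c x y z * c x (y * z) w = c x y (z * w) * c (x * y) z w)
    (hop : ∀ x x' y y' z z' : T, nle x x' → nle y y' → nle z z' →
      nle (c x y z) (c x' y' z'))
    : ∀ t : T, ∀ e ∈ E T, ∀ f ∈ E T, c e t f = θ (e * t * f * t⁻¹) := by
  intro t e he f hf
  have he' : e * e = e := he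
  have hf' : f * f = f := hf
  have hei : e⁻¹ = e := Aux.idem_inv he'
  have hfi : f⁻¹ = f := Aux.idem_inv hf'
  have hf2 : ∀ x : T, f * (f * x) = f * x := fun x => by rw [← mul_assoc, hf']
  -- k := t*f*t⁻¹ is idempotent
  have hk : (t * f * t⁻¹) * (t * f * t⁻¹) = t * f * t⁻¹ := by
    calc (t * f * t⁻¹) * (t * f * t⁻¹)
        = t * (f * (t⁻¹ * t) * (f * t⁻¹)) := by simp only [mul_assoc]
      _ = t * ((t⁻¹ * t) * f * (f * t⁻¹)) := by rw [Aux.idem_comm hf' (Aux.ll_idem t)]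
      _ = t * f * t⁻¹ := by
          simp only [mul_assoc, hf2]
          rw [← mul_assoc, ← mul_assoc, InverseSemigroup.mul_inv_mul]
  have hke : (t * f * t⁻¹) * e = e * (t * f * t⁻¹) := Aux.idem_comm hk he'
  have hek : e * (t * f * t⁻¹) = e * t * f * t⁻¹ := by simp only [mul_assoc]
  -- g := e*t*f*t⁻¹ is idempotent
  have hg : (e * t * f * t⁻¹) * (e * t * f * t⁻¹) = e * t * f * t⁻¹ := by
    have h := Aux.idem_mul he' hk
    rwa [hek] at h
  have hgi : (e * t * f * t⁻¹)⁻¹ = e * t * f * t⁻¹ := Aux.idem_inv hg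
  have hgk : (e * t * f * t⁻¹) * (t * f * t⁻¹) = e * t * f * t⁻¹ := by
    rw [← hek, mul_assoc e, hk]
  -- r-computations
  have hrg : r (e * t * f * t⁻¹) = e * t * f * t⁻¹ := by
    show (e * t * f * t⁻¹) * (e * t * f * t⁻¹)⁻¹ = e * t * f * t⁻¹
    rw [hgi]; exact hg
  have hrk : r (t * f * t⁻¹) = t * f * t⁻¹ := by
    show (t * f * t⁻¹) * (t * f * t⁻¹)⁻¹ = t * f * t⁻¹
    rw [Aux.idem_inv hk]; exact hk
  have hretf : r (e * t * f) = e * t * f * t⁻¹ := by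
    show (e * t * f) * (e * t * f)⁻¹ = e * t * f * t⁻¹
    rw [Aux.mul_inv_rev, Aux.mul_inv_rev, hei, hfi]
    simp only [mul_assoc, hf2]
    rw [show e * (t * (f * (t⁻¹ * e))) = (e * (t * f * t⁻¹)) * e from by
      simp only [mul_assoc]]
    rw [mul_assoc, hke, ← mul_assoc, he']
    simp only [mul_assoc]
  have hx1 : e * (t * f) * t⁻¹ = e * t * f * t⁻¹ := by simp only [mul_assoc]
  have hx2 : e * t * (f * t⁻¹) = e * t * f * t⁻¹ := by simp only [mul_assoc]
  -- the order-preservation consequences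
  have d1 : c e (t * f) t⁻¹ = θ (e * t * f * t⁻¹) * c e t t⁻¹ := by
    have h : c e (t * f) t⁻¹ = c e (t * f) t⁻¹ * (c e (t * f) t⁻¹)⁻¹ * c e t t⁻¹ :=
      hop e e (t * f) t t⁻¹ t⁻¹ (Aux.nle_refl e) (Aux.nle_idem_mul_right hf' t)
        (Aux.nle_refl t⁻¹)
    rwa [hc, (congrArg r hx1).trans hrg] at h
  have d2 : c e t (f * t⁻¹) = θ (e * t * f * t⁻¹) * c e t t⁻¹ := by
    have h : c e t (f * t⁻¹) = c e t (f * t⁻¹) * (c e t (f * t⁻¹))⁻¹ * c e t t⁻¹ :=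
      hop e e t t (f * t⁻¹) t⁻¹ (Aux.nle_refl e) (Aux.nle_refl t)
        (Aux.nle_idem_mul_left hf' t⁻¹)
    rwa [hc, (congrArg r hx2).trans hrg] at h
  have hY : c e (t * f) t⁻¹ = c e t (f * t⁻¹) := d1.trans d2.symm
  have d3 : c (e * t) f t⁻¹ = θ (e * t * f * t⁻¹) * c t f t⁻¹ := by
    have h : c (e * t) f t⁻¹ = c (e * t) f t⁻¹ * (c (e * t) f t⁻¹)⁻¹ * c t f t⁻¹ :=
      hop (e * t) t f f t⁻¹ t⁻¹ (Aux.nle_idem_mul_left he' t) (Aux.nle_refl f)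
        (Aux.nle_refl t⁻¹)
    rwa [hc, hrg] at h
  have hck : c t f t⁻¹ = θ (t * f * t⁻¹) * c t f t⁻¹ := by
    conv_lhs => rw [← InverseSemigroup.mul_inv_mul (c t f t⁻¹)]
    rw [hc, hrk]
  have hX : η e (c t f t⁻¹) = c (e * t) f t⁻¹ := by
    rw [hη1 e he, d3, hck, ← mul_assoc, ← mul_assoc, ← hθmul e he _ hk,
      ← hθmul _ hg _ hk, hek, hgk]
  -- the cocycle identity at (e, t, f, t⁻¹)
  have key := hcoc e t f t⁻¹
  rw [hX, hY] at key
  -- key : c (e*t) f t⁻¹ * c e t f * c e t (f*t⁻¹) = c e t (f*t⁻¹) * c (e*t) f t⁻¹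
  rw [hAcomm (c (e * t) f t⁻¹) (c e t f), mul_assoc,
    hAcomm (c (e * t) f t⁻¹) (c e t (f * t⁻¹))] at key
  -- key : c e t f * (c e t (f*t⁻¹) * c (e*t) f t⁻¹) = c e t (f*t⁻¹) * c (e*t) f t⁻¹
  have hXX : c (e * t) f t⁻¹ * (c (e * t) f t⁻¹)⁻¹ = θ (e * t * f * t⁻¹) :=
    (hc (e * t) f t⁻¹).trans (congrArg θ hrg)
  have hYY : c e t (f * t⁻¹) * (c e t (f * t⁻¹))⁻¹ = θ (e * t * f * t⁻¹) :=
    (hc e t (f * t⁻¹)).trans (congrArg θ ((congrArg r hx2).trans hrg))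
  have hθg : θ (e * t * f * t⁻¹) * θ (e * t * f * t⁻¹) = θ (e * t * f * t⁻¹) :=
    hθE _ hg
  have hZZ : (c e t (f * t⁻¹) * c (e * t) f t⁻¹) *
      ((c (e * t) f t⁻¹)⁻¹ * (c e t (f * t⁻¹))⁻¹) = θ (e * t * f * t⁻¹) := by
    calc (c e t (f * t⁻¹) * c (e * t) f t⁻¹) *
        ((c (e * t) f t⁻¹)⁻¹ * (c e t (f * t⁻¹))⁻¹)
        = c e t (f * t⁻¹) * (c (e * t) f t⁻¹ * (c (e * t) f t⁻¹)⁻¹) *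
            (c e t (f * t⁻¹))⁻¹ := by simp only [mul_assoc]
      _ = c e t (f * t⁻¹) * θ (e * t * f * t⁻¹) * (c e t (f * t⁻¹))⁻¹ := by rw [hXX]
      _ = c e t (f * t⁻¹) * (c e t (f * t⁻¹))⁻¹ * θ (e * t * f * t⁻¹) := by
          rw [mul_assoc, hAcomm (θ (e * t * f * t⁻¹)) ((c e t (f * t⁻¹))⁻¹),
            ← mul_assoc]
      _ = θ (e * t * f * t⁻¹) * θ (e * t * f * t⁻¹) := by rw [hYY]
      _ = θ (e * t * f * t⁻¹) := hθg
  have key3 : c e t f * ((c e t (f * t⁻¹) * c (e * t) f t⁻¹) *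
      ((c (e * t) f t⁻¹)⁻¹ * (c e t (f * t⁻¹))⁻¹)) =
      (c e t (f * t⁻¹) * c (e * t) f t⁻¹) *
      ((c (e * t) f t⁻¹)⁻¹ * (c e t (f * t⁻¹))⁻¹) := by
    rw [← mul_assoc, key]
  rw [hZZ] at key3
  -- key3 : c e t f * θ (e*t*f*t⁻¹) = θ (e*t*f*t⁻¹)
  have hcc : c e t f * θ (e * t * f * t⁻¹) = c e t f := by
    have h := hc e t f
    rw [hretf] at h
    rw [← h, hAcomm]
    exact InverseSemigroup.mul_inv_mul _
  exact hcc.symm.trans key3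
end

section
/- With ξ_t as defined from a strongly normalized 3-cocycle c, for every t ∈ T, u ∈ F(T ⊔ T⁻¹) and v ∈ F(T ⊔ T⁻¹)¹, one has ξ_t(uv) = ξ_t(u) · ξ_t([φ(u)]v), where by convention ξ_t([φ(u)]v) = θ(r(t φ(u))) when v is empty. -/
open InverseSemigroup

/-- The value in `T` of the letter `(x, true) = [x]` or `(x, false) = [x]⁻¹`. -/
def letterVal {T : Type*} [InverseSemigroup T] (p : T × Bool) : T :=
  if p.2 then p.1 else p.1⁻¹

/-- The evaluation `φ` in `T` of a nonempty word `p :: l` over `T ⊔ T⁻¹`. -/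
def wordVal {T : Type*} [InverseSemigroup T] (p : T × Bool) (l : List (T × Bool)) : T :=
  l.foldl (fun acc q => acc * letterVal q) (letterVal p)


lemma my_r_idem {S : Type*} [InverseSemigroup S] (s : S) : r s * r s = r s := by
  show s * s⁻¹ * (s * s⁻¹) = s * s⁻¹
  rw [← mul_assoc, InverseSemigroup.mul_inv_mul]

lemma my_r_mem {S : Type*} [InverseSemigroup S] (s : S) : r s ∈ E S := my_r_idem s

lemma my_r_absorb {S : Type*} [InverseSemigroup S] (s u : S) :
    r s * r (s * u) = r (s * u) := by
  show s * s⁻¹ * (s * u * (s * u)⁻¹) = s * u * (s * u)⁻¹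
  simp only [← mul_assoc]
  rw [InverseSemigroup.mul_inv_mul]

lemma my_wordVal_cons {T : Type*} [InverseSemigroup T] (p q : T × Bool)
    (w : List (T × Bool)) :
    wordVal p (q :: w) = wordVal (letterVal p * letterVal q, true) w := by
  simp [wordVal, letterVal]

lemma my_wordVal_false {T : Type*} [InverseSemigroup T] (x : T)
    (l : List (T × Bool)) : wordVal (x, false) l = wordVal (x⁻¹, true) l := by
  simp [wordVal, letterVal]

lemma my_wordVal_nil {T : Type*} [InverseSemigroup T] (x : T) (b : Bool) :
    wordVal (x, true) [] = x := by simp [wordVal, letterVal]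

/-- Multiplicativity of `ξ_t`: `ξ_t(uv) = ξ_t(u) ξ_t([φ(u)]v)`, with the convention
`ξ_t([φ(u)]v) = θ(r(t φ(u)))` when `v` is empty. -/
theorem xi_multiplicative {T A : Type*} [InverseSemigroup T] [InverseSemigroup A]
    (θ : T → A) (η : T → A → A)
    (hAcomm : ∀ a b : A, a * b = b * a)
    (hθE : ∀ e ∈ E T, θ e ∈ E A)
    (hθinj : ∀ e ∈ E T, ∀ f ∈ E T, θ e = θ f → e = f)
    (hθsurj : ∀ a ∈ E A, ∃ e ∈ E T, θ e = a)
    (hθmul : ∀ e ∈ E T, ∀ f ∈ E T, θ (e * f) = θ e * θ f)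
    (hηhom : ∀ t u : T, ∀ a : A, η (t * u) a = η t (η u a))
    (hηmul : ∀ t : T, ∀ a b : A, η t (a * b) = η t a * η t b)
    (hη1 : ∀ e ∈ E T, ∀ a : A, η e a = θ e * a)
    (hη2 : ∀ t : T, ∀ e ∈ E T, η t (θ e) = θ (t * e * t⁻¹))
    (c : T → T → T → A)
    (hc : ∀ x y z : T, c x y z * (c x y z)⁻¹ = θ (r (x * y * z)))
    (hcoc : ∀ x y z w : T,
      η x (c y z w) * c x y z * c x (y * z) w = c x y (z * w) * c (x * y) z w)
    (hop : ∀ x x' y y' z z' : T, nle x x' → nle y y' → nle z z' →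
      nle (c x y z) (c x' y' z'))
    (hsn : ∀ x y z : T, (x ∈ E T ∨ y ∈ E T ∨ z ∈ E T) →
      c x y z = θ (r (x * y * z)))
    (ξ : T → List (T × Bool) → A)
    (hξ1 : ∀ t x : T, ξ t [(x, true)] = θ (r (t * x)))
    (hξ2 : ∀ t x : T, ∀ u : List (T × Bool),
      ξ t ((x, false) :: u) = (c t x⁻¹ x)⁻¹ * ξ t ((x⁻¹, true) :: u))
    (hξ3 : ∀ t x y : T, ∀ v : List (T × Bool),
      ξ t ((x, true) :: (y, true) :: v) = c t x y * ξ t ((x * y, true) :: v))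
    (hξ4 : ∀ t x y : T, ∀ v : List (T × Bool),
      ξ t ((x, true) :: (y, false) :: v) =
        (c t (x * y⁻¹) y)⁻¹ * ξ t ((x * y⁻¹, true) :: v))
    : (∀ t : T, ∀ p : T × Bool, ∀ l : List (T × Bool), ∀ q : T × Bool,
        ∀ m : List (T × Bool),
        ξ t ((p :: l) ++ (q :: m)) = ξ t (p :: l) * ξ t ((wordVal p l, true) :: q :: m)) ∧
      (∀ t : T, ∀ p : T × Bool, ∀ l : List (T × Bool),
        ξ t (p :: l) = ξ t (p :: l) * θ (r (t * wordVal p l))) := by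

  -- basic absorption facts
  have hEA : ∀ s : T, θ (r s) * θ (r s) = θ (r s) := fun s => hθE _ (my_r_mem s)
  have habs : ∀ s u : T, θ (r s) * θ (r (s * u)) = θ (r (s * u)) := fun s u => by
    rw [← hθmul _ (my_r_mem s) _ (my_r_mem (s * u)), my_r_absorb]
  have hcabs : ∀ x y z : T, θ (r (x * y * z)) * c x y z = c x y z := fun x y z => by
    rw [← hc x y z, InverseSemigroup.mul_inv_mul]
  have hcinvabs : ∀ x y z : T, θ (r (x * y * z)) * (c x y z)⁻¹ = (c x y z)⁻¹ :=
    fun x y z => by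
      rw [← hc x y z, hAcomm (c x y z) (c x y z)⁻¹, InverseSemigroup.inv_mul_inv]
  -- Lemma A: θ(r(t x)) absorbs into ξ t ((x,true)::v)
  have lemA : ∀ (t x : T) (v : List (T × Bool)),
      θ (r (t * x)) * ξ t ((x, true) :: v) = ξ t ((x, true) :: v) := by
    intro t x v
    match v with
    | [] => rw [hξ1]; exact hEA (t * x)
    | (y, true) :: w =>
      rw [hξ3, ← hcabs t x y, ← mul_assoc, ← mul_assoc, habs (t * x) y]
    | (y, false) :: w =>
      have habs' : θ (r (t * x)) * θ (r (t * (x * y⁻¹) * y)) = θ (r (t * (x * y⁻¹) * y)) := by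
        have h := habs (t * x) (y⁻¹ * y)
        simpa [r, mul_assoc] using h
      rw [hξ4, ← hcinvabs t (x * y⁻¹) y, ← mul_assoc, ← mul_assoc, habs']
  -- Claim 2, for heads of the form (x, true)
  have claim2 : ∀ (l : List (T × Bool)) (t x : T),
      ξ t ((x, true) :: l) = ξ t ((x, true) :: l) * θ (r (t * wordVal (x, true) l)) := by
    intro l
    induction l with
    | nil =>
      intro t x
      have hw : wordVal (x, true) ([] : List (T × Bool)) = x := by simp [wordVal, letterVal]
      rw [hw, hξ1, hEA (t * x)]
    | cons q w ih =>
      obtain ⟨y, b⟩ := q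
      intro t x
      cases b with
      | true =>
        have hw : wordVal (x, true) ((y, true) :: w) = wordVal (x * y, true) w := by
          simp [wordVal, letterVal]
        rw [hw, hξ3, mul_assoc, ← ih t (x * y)]
      | false =>
        have hw : wordVal (x, true) ((y, false) :: w) = wordVal (x * y⁻¹, true) w := by
          simp [wordVal, letterVal]
        rw [hw, hξ4, mul_assoc, ← ih t (x * y⁻¹)]
  -- Claim 1, for heads of the form (x, true)
  have claim1 : ∀ (l : List (T × Bool)) (t x : T) (q : T × Bool) (m : List (T × Bool)),
      ξ t (((x, true) :: l) ++ (q :: m)) =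
        ξ t ((x, true) :: l) * ξ t ((wordVal (x, true) l, true) :: q :: m) := by
    intro l
    induction l with
    | nil =>
      intro t x q m
      have hw : wordVal (x, true) ([] : List (T × Bool)) = x := by simp [wordVal, letterVal]
      rw [hw, hξ1]
      exact (lemA t x (q :: m)).symm
    | cons p w ih =>
      obtain ⟨y, b⟩ := p
      intro t x q m
      cases b with
      | true =>
        have hw : wordVal (x, true) ((y, true) :: w) = wordVal (x * y, true) w := by
          simp [wordVal, letterVal]
        have h := ih t (x * y) q m
        rw [List.cons_append] at h
        show ξ t ((x, true) :: (y, true) :: (w ++ q :: m)) = _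
        rw [hξ3, h, hw, hξ3, mul_assoc]
      | false =>
        have hw : wordVal (x, true) ((y, false) :: w) = wordVal (x * y⁻¹, true) w := by
          simp [wordVal, letterVal]
        have h := ih t (x * y⁻¹) q m
        rw [List.cons_append] at h
        show ξ t ((x, true) :: (y, false) :: (w ++ q :: m)) = _
        rw [hξ4, h, hw, hξ4, mul_assoc]
  constructor
  · intro t p l q m
    obtain ⟨x, b⟩ := p
    cases b with
    | true => exact claim1 l t x q m
    | false =>
      have h := claim1 l t x⁻¹ q m
      rw [List.cons_append] at h
      show ξ t ((x, false) :: (l ++ q :: m)) = _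
      rw [hξ2, h, my_wordVal_false, hξ2, mul_assoc]
  · intro t p l
    obtain ⟨x, b⟩ := p
    cases b with
    | true => exact claim2 l t x
    | false =>
      rw [hξ2, my_wordVal_false, mul_assoc, ← claim2 l t x⁻¹]
end
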